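/- Let V be a finite type and E a collection of 3-element subsets of V (a 3-hypergraph on V). Call two vertices a, b adjacent if a ≠ b and some hyperedge e ∈ E contains both, and let reachability be the reflexive-transitive closure of this adjacency. Let S be the subgroup of Perm(V) generated by all 3-cycles (a b c) with {a,b,c} ∈ E. Then a permutation g of V belongs to S if and only if (i) for every v, g(v) is reachable from v, and (ii) for every v, the restriction of g to the connected component {u : V | u reachable from v} (which is invariant under g by (i)) is an even permutation of that component. (Equivalently, S is the direct product of the alternating groups of the connected components.) -/

import Mathlib

set_option linter.unusedSectionVars false

open scoped Classical

/-- Two vertices of a 3-hypergraph are adjacent if they are distinct and lie in a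
common hyperedge. -/
def hyperAdj {V : Type*} (E : Set (Finset V)) (a b : V) : Prop :=
  a ≠ b ∧ ∃ e ∈ E, a ∈ e ∧ b ∈ e

namespace CyclingAux

variable {V : Type*} [Fintype V] [DecidableEq V]

/-- The 3-cycle `a ↦ b ↦ c ↦ a`. -/
def c3 (a b c : V) : Equiv.Perm V := Equiv.swap a c * Equiv.swap a b

/-- The generating set. -/
def genSet (E : Set (Finset V)) : Set (Equiv.Perm V) :=
  {σ : Equiv.Perm V | ∃ a b c : V, a ≠ b ∧ a ≠ c ∧ b ≠ c ∧
          ({a, b, c} : Finset V) ∈ E ∧ σ = Equiv.swap a c * Equiv.swap a b}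

variable {a b c d x y z w : V} {E : Set (Finset V)}

local notation "R" => Relation.ReflTransGen (hyperAdj E)
local notation "S" => Subgroup.closure (genSet E)

lemma adj_symm (h : hyperAdj E a b) : hyperAdj E b a :=
  ⟨h.1.symm, h.2.imp fun e ⟨he, h1, h2⟩ => ⟨he, h2, h1⟩⟩

lemma R_symm (h : R a b) : R b a :=
  by induction h with
  | refl => exact .refl
  | tail _ hbc ih => exact .head (adj_symm hbc) ih

lemma c3_left (hba : b ≠ a) (hbc : b ≠ c) : c3 a b c a = b := by
  simp [c3, Equiv.swap_apply_of_ne_of_ne hba hbc]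

lemma c3_mid : c3 a b c b = c := by simp [c3]

lemma c3_right (hca : c ≠ a) (hcb : c ≠ b) : c3 a b c c = a := by
  simp [c3, Equiv.swap_apply_of_ne_of_ne hca hcb]

lemma c3_fix (h1 : x ≠ a) (h2 : x ≠ b) (h3 : x ≠ c) : c3 a b c x = x := by
  simp [c3, Equiv.swap_apply_of_ne_of_ne h1 h2, Equiv.swap_apply_of_ne_of_ne h1 h3]

lemma c3_apply (hab : a ≠ b) (hac : a ≠ c) (hbc : b ≠ c) (u : V) :
    c3 a b c u = if u = a then b else if u = b then c else if u = c then a else u := by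
  split_ifs with h1 h2 h3
  · subst h1; exact c3_left hab.symm hbc
  · subst h2; exact c3_mid
  · subst h3; exact c3_right hac.symm hbc.symm
  · exact c3_fix h1 h2 h3

lemma c3_rot (hab : a ≠ b) (hac : a ≠ c) (hbc : b ≠ c) : c3 a b c = c3 b c a := by
  ext u
  rw [c3_apply hab hac hbc, c3_apply hbc hab.symm hac.symm]
  split_ifs <;> simp_all

lemma c3_inv : (c3 a b c)⁻¹ = c3 a c b := by
  rw [c3, mul_inv_rev, Equiv.swap_inv, Equiv.swap_inv]; rfl

lemma c3_sign (hab : a ≠ b) (hac : a ≠ c) :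
    Equiv.Perm.sign (c3 a b c) = 1 := by
  rw [c3, map_mul, Equiv.Perm.sign_swap hac, Equiv.Perm.sign_swap hab]
  decide

lemma c3_conj (σ : Equiv.Perm V) : σ * c3 a b c * σ⁻¹ = c3 (σ a) (σ b) (σ c) := by
  have h1 := Equiv.swap_apply_apply σ a c
  have h2 := Equiv.swap_apply_apply σ a b
  rw [c3, c3, h1, h2]; group

lemma prod1 (hab : a ≠ b) (hac : a ≠ c) (had : a ≠ d) (hbc : b ≠ c) (hbd : b ≠ d)
    (hcd : c ≠ d) : c3 a b c * c3 a d b = c3 a d c := by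
  ext u
  simp only [Equiv.Perm.mul_apply]
  rw [c3_apply had hab hbd.symm, c3_apply hab hac hbc, c3_apply had hac hcd.symm]
  split_ifs <;> simp_all

lemma prod2 (hab : a ≠ b) (hac : a ≠ c) (had : a ≠ d) (hbc : b ≠ c) (hbd : b ≠ d)
    (hcd : c ≠ d) : c3 a c d * c3 a d b = c3 b c d := by
  ext u
  simp only [Equiv.Perm.mul_apply]
  rw [c3_apply had hab hbd.symm, c3_apply hac had hcd, c3_apply hbc hbd hcd]
  split_ifs <;> simp_all

/-! ### Membership helpers -/

lemma gen_mem (hab : a ≠ b) (hac : a ≠ c) (hbc : b ≠ c)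
    (he : ({a, b, c} : Finset V) ∈ E) : c3 a b c ∈ S :=
  Subgroup.subset_closure ⟨a, b, c, hab, hac, hbc, he, rfl⟩

lemma triple_rot : ({a, b, c} : Finset V) = {b, c, a} := by
  ext u; simp; tauto

lemma triple_swap : ({a, b, c} : Finset V) = {a, c, b} := by
  ext u; simp; tauto

lemma good_rot (hab : a ≠ b) (hac : a ≠ c) (hbc : b ≠ c) (h : c3 a b c ∈ S) :
    c3 b c a ∈ S := by rw [← c3_rot hab hac hbc]; exact h

lemma good_swap (h : c3 a b c ∈ S) : c3 a c b ∈ S := by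
  rw [← c3_inv]; exact Subgroup.inv_mem _ h

lemma exists_third (hE : ∀ e ∈ E, e.card = 3) {e : Finset V} (he : e ∈ E)
    (hc : c ∈ e) (hd : d ∈ e) (hcd : c ≠ d) :
    ∃ w, w ≠ c ∧ w ≠ d ∧ ({c, d, w} : Finset V) ∈ E := by
  have h3 := hE e he
  have hsub : ({c, d} : Finset V) ⊆ e := by
    intro u hu; simp at hu; rcases hu with rfl | rfl <;> assumption
  have hcard : (e \ {c, d}).card = 1 := by
    rw [Finset.card_sdiff_of_subset hsub, h3, Finset.card_pair hcd]
  obtain ⟨w, hw⟩ := Finset.card_eq_one.1 hcard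
  have hwmem : w ∈ e \ ({c, d} : Finset V) := by rw [hw]; exact Finset.mem_singleton_self w
  rw [Finset.mem_sdiff, Finset.mem_insert, Finset.mem_singleton] at hwmem
  push_neg at hwmem
  obtain ⟨hwe, hwc, hwd⟩ := hwmem
  refine ⟨w, hwc, hwd, ?_⟩
  have hsub2 : ({c, d, w} : Finset V) ⊆ e := by
    intro u hu; simp at hu; rcases hu with rfl | rfl | rfl <;> assumption
  have hcard2 : ({c, d, w} : Finset V).card = 3 :=
    Finset.card_eq_three.2 ⟨c, d, w, hcd, Ne.symm hwc, Ne.symm hwd, rfl⟩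
  have : ({c, d, w} : Finset V) = e :=
    Finset.eq_of_subset_of_card_le hsub2 (by rw [h3, hcard2])
  rw [this]; exact he

/-- The key step lemma: a good triple can be extended along an adjacency. -/
lemma step (hE : ∀ e ∈ E, e.card = 3) (hab : a ≠ b) (hac : a ≠ c) (hbc : b ≠ c)
    (hS : c3 a b c ∈ S) (hadj : hyperAdj E c d) (hda : d ≠ a) (hdb : d ≠ b) :
    c3 a b d ∈ S := by
  have hcd : c ≠ d := hadj.1
  have key : ∀ ρ : Equiv.Perm V, ρ ∈ S → c3 (ρ a) (ρ b) (ρ c) ∈ S := fun ρ hρ => by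
    rw [← c3_conj]; exact mul_mem (mul_mem hρ hS) (inv_mem hρ)
  obtain ⟨e, he, hce, hde⟩ := hadj.2
  obtain ⟨w, hwc, hwd, hedge⟩ := exists_third hE he hce hde hcd
  by_cases hwa : w = a
  · -- w = a : the edge is {c, d, a}
    subst hwa
    have hedge' : ({w, d, c} : Finset V) ∈ E := by
      rwa [show ({w, d, c} : Finset V) = {c, d, w} by ext u; simp; tauto]
    have hρ : c3 w d c ∈ S := gen_mem hwd hwc hcd.symm hedge'
    have h1 := key _ hρ
    rw [c3_left hda hcd.symm, c3_fix hab.symm hdb.symm hbc,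
      c3_right hwc.symm hcd] at h1
    -- h1 : c3 d b w ∈ S
    have h2 := good_swap h1
    rwa [c3_rot hda hdb hab] at h2
  by_cases hwb : w = b
  · subst hwb
    have hedge' : ({w, d, c} : Finset V) ∈ E := by
      rwa [show ({w, d, c} : Finset V) = {c, d, w} by ext u; simp; tauto]
    have hρ : c3 w d c ∈ S := gen_mem hwd hwc hcd.symm hedge'
    have h1 := key _ hρ
    rw [c3_fix hab hda.symm hac, c3_left hdb hcd.symm, c3_right hwc.symm hcd] at h1
    -- h1 : c3 a d w ∈ S
    exact good_swap h1
  · have hτ : c3 c d w ∈ S := gen_mem hcd hwc.symm hwd.symm hedge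
    have h1 := key _ hτ
    rwa [c3_fix hac hda.symm (Ne.symm hwa), c3_fix hbc hdb.symm (Ne.symm hwb),
      c3_left hcd.symm hwd.symm] at h1

/-- From two good triples sharing an edge, the other two triples of the
four-element set are good. -/
lemma subset_good (hab : a ≠ b) (hac : a ≠ c) (had : a ≠ d) (hbc : b ≠ c)
    (hbd : b ≠ d) (hcd : c ≠ d) (h1 : c3 a b c ∈ S) (h2 : c3 a b d ∈ S) :
    c3 a c d ∈ S ∧ c3 b c d ∈ S := by
  have h3 : c3 a d b ∈ S := good_swap h2
  have h4 : c3 a d c ∈ S := by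
    rw [← prod1 hab hac had hbc hbd hcd]; exact mul_mem h1 h3
  have h5 : c3 a c d ∈ S := good_swap h4
  refine ⟨h5, ?_⟩
  rw [← prod2 hab hac had hbc hbd hcd]; exact mul_mem h5 h3


lemma stage1 (hE : ∀ e ∈ E, e.card = 3) (hxy : x ≠ y) (h : R x y) :
    ∃ w, w ≠ x ∧ w ≠ y ∧ c3 x y w ∈ S := by
  induction h with
  | refl => exact absurd rfl hxy
  | @tail b y hxb hady ih =>
    have hby : b ≠ y := hady.1
    by_cases hxb' : x = b
    · subst hxb'
      obtain ⟨e, he, hxe, hye⟩ := hady.2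
      obtain ⟨w, hwx, hwy, hedge⟩ := exists_third hE he hxe hye hxy
      exact ⟨w, hwx, hwy, gen_mem hxy hwx.symm hwy.symm hedge⟩
    · obtain ⟨w, hwx, hwb, hS⟩ := ih hxb'
      by_cases hyw : y = w
      · subst hyw
        refine ⟨b, Ne.symm hxb', hby, ?_⟩
        exact good_swap hS
      · -- rotate to put b last, then step along the adjacency b ~ y
        have h1 : c3 w x b ∈ S := by
          rwa [c3_rot hxb' (Ne.symm hwx) (Ne.symm hwb),
            c3_rot (Ne.symm hwb) (Ne.symm hxb') hwx] at hS
        have h2 : c3 w x y ∈ S := step hE hwx hwb hxb' h1 hady hyw (Ne.symm hxy)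
        refine ⟨w, hwx, fun hwy => hyw hwy.symm, ?_⟩
        rwa [c3_rot hwx (fun hwy => hyw hwy.symm) hxy] at h2

/-- Walking a good triple's third vertex around the component. -/
lemma walk (hE : ∀ e ∈ E, e.card = 3) (hxy : x ≠ y) {w₀ : V}
    (hw₀x : w₀ ≠ x) (hw₀y : w₀ ≠ y) (hw₀ : c3 x y w₀ ∈ S)
    (h : R y z) : z = x ∨ z = y ∨ (z ≠ x ∧ z ≠ y ∧ c3 x y z ∈ S) := by
  induction h with
  | refl => exact Or.inr (Or.inl rfl)
  | @tail p q hyp hadj ih =>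
    by_cases hqx : q = x
    · exact Or.inl hqx
    by_cases hqy : q = y
    · exact Or.inr (Or.inl hqy)
    refine Or.inr (Or.inr ⟨hqx, hqy, ?_⟩)
    by_cases hqw : q = w₀
    · subst hqw; exact hw₀
    rcases ih with rfl | rfl | ⟨hpx, hpy, hS⟩
    · -- p = x, q adjacent to x
      have h1 : c3 y w₀ p ∈ S := by
        rwa [c3_rot hxy (Ne.symm hw₀x) (Ne.symm hw₀y)] at hw₀
      have h2 : c3 y w₀ q ∈ S :=
        step hE (Ne.symm hw₀y) (Ne.symm hxy) hw₀x h1 hadj hqy hqw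
      have h3 := (subset_good (Ne.symm hw₀y) (Ne.symm hxy) (Ne.symm hqy) hw₀x
        (Ne.symm hqw) (Ne.symm hqx) h1 h2).1
      -- h3 : c3 y p q ∈ S   (p = x)
      have h4 := good_swap h3
      rwa [c3_rot (Ne.symm hqy) (Ne.symm hxy) hqx, c3_rot hqx hqy hxy] at h4
    · -- p = y, q adjacent to y
      have h1 : c3 w₀ x p ∈ S := by
        rwa [c3_rot hxy (Ne.symm hw₀x) (Ne.symm hw₀y),
          c3_rot (Ne.symm hw₀y) (Ne.symm hxy) hw₀x] at hw₀
      have h2 : c3 w₀ x q ∈ S :=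
        step hE hw₀x hw₀y hxy h1 hadj hqw hqx
      exact (subset_good hw₀x hw₀y (Ne.symm hqw) hxy (Ne.symm hqx)
        (Ne.symm hqy) h1 h2).2
    · exact step hE hxy (fun h => hpx h.symm) (fun h => hpy h.symm) hS hadj hqx hqy

/-- Every 3-cycle supported on a single connected component lies in `S`. -/
lemma main3 (hE : ∀ e ∈ E, e.card = 3) (hxy : x ≠ y) (hRxy : R x y)
    (hzx : z ≠ x) (hzy : z ≠ y) (hRxz : R x z) : c3 x y z ∈ S := by
  obtain ⟨w₀, hw₀x, hw₀y, hw₀⟩ := stage1 hE hxy hRxy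
  have hRyz : R y z := (R_symm hRxy).trans hRxz
  rcases walk hE hxy hw₀x hw₀y hw₀ hRyz with rfl | rfl | ⟨_, _, hS⟩
  · exact absurd rfl hzx
  · exact absurd rfl hzy
  · exact hS


/-- The target property: `g` moves vertices within components and is even on each. -/
def P (E : Set (Finset V)) (g : Equiv.Perm V) : Prop :=
  (∀ v : V, Relation.ReflTransGen (hyperAdj E) v (g v)) ∧
    ∀ v : V,
      ∀ h : ∀ u : V, Relation.ReflTransGen (hyperAdj E) v u ↔
          Relation.ReflTransGen (hyperAdj E) v (g u),
        Equiv.Perm.sign (g.subtypePerm (p := fun u => Relation.ReflTransGen (hyperAdj E) v u)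
          (fun u => (h u).symm)) = 1

lemma compIff {g : Equiv.Perm V} (h1 : ∀ v, R v (g v)) (v : V) :
    ∀ u : V, R v u ↔ R v (g u) :=
  fun u => ⟨fun h => h.trans (h1 u), fun h => h.trans (R_symm (h1 u))⟩

lemma P_one : P E 1 := by
  refine ⟨fun v => Relation.ReflTransGen.refl, fun v h => ?_⟩
  have : (1 : Equiv.Perm V).subtypePerm (p := fun u => R v u) (fun u => (h u).symm) = 1 := rfl
  rw [this, map_one]

lemma P_mul {g h : Equiv.Perm V} (hg : P E g) (hh : P E h) : P E (g * h) := by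
  refine ⟨fun v => (hh.1 v).trans (hg.1 (h v)), fun v hc => ?_⟩
  have e : (g * h).subtypePerm (p := fun u => R v u) (fun u => (hc u).symm) =
      g.subtypePerm (p := fun u => R v u) (fun u => (compIff hg.1 v u).symm) *
        h.subtypePerm (p := fun u => R v u) (fun u => (compIff hh.1 v u).symm) := rfl
  rw [e, map_mul, hg.2 v (compIff hg.1 v), hh.2 v (compIff hh.1 v), mul_one]

lemma P_inv {g : Equiv.Perm V} (hg : P E g) : P E g⁻¹ := by
  refine ⟨fun v => ?_, fun v hc => ?_⟩
  · have := hg.1 (g⁻¹ v)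
    rw [show g (g⁻¹ v) = v from g.apply_symm_apply v] at this
    exact R_symm this
  · have e : g⁻¹.subtypePerm (p := fun u => R v u) (fun u => (hc u).symm) =
        (g.subtypePerm (p := fun u => R v u) (fun u => (compIff hg.1 v u).symm))⁻¹ := rfl
    rw [e, map_inv, hg.2 v (compIff hg.1 v), inv_one]

lemma P_gen {σ : Equiv.Perm V} (hσ : σ ∈ genSet E) : P E σ := by
  obtain ⟨a, b, c, hab, hac, hbc, he, rfl⟩ := hσ
  have hmema : a ∈ ({a, b, c} : Finset V) := by simp
  have hmemb : b ∈ ({a, b, c} : Finset V) := by simp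
  have hmemc : c ∈ ({a, b, c} : Finset V) := by simp
  have hadjab : hyperAdj E a b := ⟨hab, _, he, hmema, hmemb⟩
  have hadjbc : hyperAdj E b c := ⟨hbc, _, he, hmemb, hmemc⟩
  have hadjca : hyperAdj E c a := ⟨hac.symm, _, he, hmemc, hmema⟩
  have hadjac : hyperAdj E a c := ⟨hac, _, he, hmema, hmemc⟩
  constructor
  · intro v
    show R v (c3 a b c v)
    rcases eq_or_ne v a with rfl | hva
    · rw [c3_left hab.symm hbc]; exact .single hadjab
    rcases eq_or_ne v b with rfl | hvb
    · rw [c3_mid]; exact .single hadjbc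
    rcases eq_or_ne v c with rfl | hvc
    · rw [c3_right hac.symm hbc.symm]; exact .single hadjca
    · rw [c3_fix hva hvb hvc]
  · intro v hc
    by_cases hva : R v a
    · have hmoved : ∀ u : V, (Equiv.swap a c * Equiv.swap a b) u ≠ u → R v u := by
        intro u hu
        rcases eq_or_ne u a with rfl | h1
        · exact hva
        rcases eq_or_ne u b with rfl | h2
        · exact hva.trans (.single hadjab)
        rcases eq_or_ne u c with rfl | h3
        · exact hva.trans (.single hadjac)
        · exact absurd (c3_fix h1 h2 h3) hu
      rw [Equiv.Perm.sign_subtypePerm _ (fun u => (hc u).symm) hmoved]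
      exact c3_sign hab hac
    · have h1 : (Equiv.swap a c * Equiv.swap a b).subtypePerm (p := fun u => R v u)
            (fun u => (hc u).symm) = 1 := by
        ext ⟨u, hu⟩
        have h1 : u ≠ a := fun h => hva (h ▸ hu)
        have h2 : u ≠ b := fun h => hva ((h ▸ hu).trans (.single (adj_symm hadjab)))
        have h3 : u ≠ c := fun h => hva ((h ▸ hu).trans (.single hadjca))
        exact c3_fix h1 h2 h3
      rw [h1, map_one]

/-- The property `P` as a subgroup. -/
def PSub (E : Set (Finset V)) : Subgroup (Equiv.Perm V) where
  carrier := {g | P E g}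
  one_mem' := P_one
  mul_mem' := fun ha hb => P_mul ha hb
  inv_mem' := fun ha => P_inv ha

lemma mem_P {g : Equiv.Perm V} (hg : g ∈ S) : P E g :=
  (Subgroup.closure_le (PSub E)).2 (fun _ hσ => P_gen hσ) hg


lemma moved_third {g : Equiv.Perm V} (hP : P E g) {a : V} (ha : g a ≠ a) :
    ∃ c, c ≠ a ∧ c ≠ g a ∧ R a c ∧ g c ≠ c := by
  by_cases h2 : g (g a) = a
  · by_contra hno
    push_neg at hno
    have hc := compIff hP.1 a
    have hne : (⟨a, Relation.ReflTransGen.refl⟩ : {t // R a t}) ≠ ⟨g a, hP.1 a⟩ :=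
      fun h => ha (congrArg Subtype.val h).symm
    have hswap : g.subtypePerm (p := fun t => R a t) (fun u => (hc u).symm) =
        Equiv.swap ⟨a, Relation.ReflTransGen.refl⟩ ⟨g a, hP.1 a⟩ := by
      ext ⟨u, hu⟩
      rcases eq_or_ne u a with rfl | h1
      · rw [show (⟨u, hu⟩ : {t // R u t}) = ⟨u, Relation.ReflTransGen.refl⟩ from
          Subtype.ext rfl, Equiv.swap_apply_left]
        rfl
      rcases eq_or_ne u (g a) with rfl | h2'
      · rw [show (⟨g a, hu⟩ : {t // R a t}) = ⟨g a, hP.1 a⟩ from Subtype.ext rfl,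
          Equiv.swap_apply_right]
        exact h2
      · rw [Equiv.swap_apply_of_ne_of_ne (fun h => h1 (congrArg Subtype.val h))
          (fun h => h2' (congrArg Subtype.val h))]
        exact hno u h1 h2' hu
    have hsign := hP.2 a hc
    rw [hswap, Equiv.Perm.sign_swap hne] at hsign
    exact absurd hsign (by decide)
  · refine ⟨g (g a), h2, ?_, (hP.1 a).trans (hP.1 (g a)), ?_⟩
    · intro h
      have : g a = a := g.injective h
      exact ha this
    · intro h
      have : g (g a) = g a := g.injective h
      have : g a = a := g.injective this
      exact ha this

lemma back (hE : ∀ e ∈ E, e.card = 3) :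
    ∀ n (g : Equiv.Perm V), g.support.card ≤ n → P E g → g ∈ S := by
  intro n
  induction n with
  | zero =>
    intro g hc _
    have h0 : g.support = ∅ := Finset.card_eq_zero.1 (Nat.le_zero.1 hc)
    rw [Equiv.Perm.support_eq_empty_iff] at h0
    rw [h0]; exact one_mem _
  | succ n ih =>
    intro g hc hP
    by_cases hg1 : g = 1
    · rw [hg1]; exact one_mem _
    obtain ⟨a, ha⟩ : ∃ a, g a ≠ a := by
      by_contra hno; push_neg at hno; exact hg1 (Equiv.ext hno)
    obtain ⟨c, hca, hcb, hRac, hgc⟩ := moved_third hP ha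
    set b := g a with hb
    have hba : b ≠ a := ha
    have τmem : c3 a b c ∈ S := main3 hE (Ne.symm hba) (hP.1 a) hca hcb hRac
    have τP : P E (c3 a b c) := mem_P τmem
    set g' := (c3 a b c)⁻¹ * g with hg'
    have hPg' : P E g' := P_mul (P_inv τP) hP
    have h1 : c3 a b c a = b := c3_left hba (fun h => hcb h.symm)
    have hg'a : g' a = a := by
      rw [hg', Equiv.Perm.mul_apply, ← hb]
      exact Equiv.Perm.inv_eq_iff_eq.2 h1.symm
    have hga : g a ≠ a := hb ▸ hba
    have hbmem : g b ≠ b := by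
      intro h
      exact hba (g.injective (h.trans hb))
    have hsub : g'.support ⊆ g.support := by
      intro u hu
      rw [Equiv.Perm.mem_support] at hu ⊢
      by_contra hfix
      apply hu
      show (c3 a b c)⁻¹ (g u) = u
      rw [hfix, show (c3 a b c)⁻¹ = c3 a c b from c3_inv]
      exact c3_fix (fun h => hga (h ▸ hfix)) (fun h => hgc (h ▸ hfix))
        (fun h => hbmem (h ▸ hfix))
    have hanot : a ∉ g'.support := Equiv.Perm.notMem_support.2 hg'a
    have hamem : a ∈ g.support := Equiv.Perm.mem_support.2 hga
    have hcard : g'.support.card ≤ n := by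
      have hs1 : g'.support ⊆ g.support.erase a := Finset.subset_erase.2 ⟨hsub, hanot⟩
      have hs2 := Finset.card_le_card hs1
      rw [Finset.card_erase_of_mem hamem] at hs2
      omega
    have hmem' : g' ∈ S := ih g' hcard hPg'
    have hfin : g = c3 a b c * g' := by rw [hg']; group
    rw [hfin]; exact mul_mem τmem hmem'

end CyclingAux

theorem cyclingGroup_mem_iff {V : Type*} [Fintype V] [DecidableEq V]
    (E : Set (Finset V)) (hE : ∀ e ∈ E, e.card = 3) (g : Equiv.Perm V) :
    g ∈ Subgroup.closure
        {σ : Equiv.Perm V | ∃ a b c : V, a ≠ b ∧ a ≠ c ∧ b ≠ c ∧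
          ({a, b, c} : Finset V) ∈ E ∧ σ = Equiv.swap a c * Equiv.swap a b} ↔
      ((∀ v : V, Relation.ReflTransGen (hyperAdj E) v (g v)) ∧
        ∀ v : V,
          ∀ h : ∀ u : V, Relation.ReflTransGen (hyperAdj E) v u ↔
              Relation.ReflTransGen (hyperAdj E) v (g u),
          Equiv.Perm.sign (g.subtypePerm (p := fun u => Relation.ReflTransGen (hyperAdj E) v u)
            (fun u => (h u).symm)) = 1) := by
  constructor
  · exact fun hg => CyclingAux.mem_P hg
  · exact fun hP => CyclingAux.back hE g.support.card g le_rfl hP
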